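/- Let T be a tree on n ≥ 2 vertices listed in an order v_1, …, v_n such that every prefix graph T_i is connected. The minimum size of an incremental connected dominating set of T equals int(T) + 1 if v_1 is a leaf of T, and equals int(T) otherwise, where int(T) is the number of internal vertices of T. -/

import Mathlib

/-- `D` is a dominating set of the prefix graph `G_i` (induced on the first `i`
vertices `v_1, …, v_i`, i.e. the vertices of `Fin n` with value `< i`);
here `D` is assumed to consist of vertices of the prefix, so that adjacency
in `G_i` coincides with adjacency in `G`. -/
def PrefixDom {n : ℕ} (G : SimpleGraph (Fin n)) (i : ℕ) (D : Finset (Fin n)) : Prop :=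
  ∀ v : Fin n, v.val < i → v ∈ D ∨ ∃ u ∈ D, G.Adj u v

/-- The natural ordering `v_1, …, v_n` of `Fin n` is always-connected:
every prefix graph `G_i` (for `1 ≤ i ≤ n`) is connected. -/
def AlwaysConnected {n : ℕ} (G : SimpleGraph (Fin n)) : Prop :=
  ∀ i : ℕ, 1 ≤ i → i ≤ n → (G.induce {v : Fin n | v.val < i}).Connected

/-- `D 1 ⊆ D 2 ⊆ ⋯ ⊆ D n` is a chain in which each `D i` is a subset of
`{v_1, …, v_i}` that is a dominating set of the prefix graph `G_i`. -/
def IncDomChain {n : ℕ} (G : SimpleGraph (Fin n)) (D : ℕ → Finset (Fin n)) : Prop :=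
  (∀ i : ℕ, 1 ≤ i → i < n → D i ⊆ D (i + 1)) ∧
  (∀ i : ℕ, 1 ≤ i → i ≤ n → (∀ v ∈ D i, v.val < i) ∧ PrefixDom G i (D i))

/-- `R` is an incremental dominating set of `G`: the final set `D n` of some
incremental dominating chain. -/
def IsIncDomSet {n : ℕ} (G : SimpleGraph (Fin n)) (R : Finset (Fin n)) : Prop :=
  ∃ D : ℕ → Finset (Fin n), IncDomChain G D ∧ R = D n

/-- An incremental connected dominating chain: additionally, each `D i`
induces a connected subgraph. -/
def IncConnDomChain {n : ℕ} (G : SimpleGraph (Fin n)) (D : ℕ → Finset (Fin n)) : Prop :=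
  IncDomChain G D ∧
    ∀ i : ℕ, 1 ≤ i → i ≤ n → (G.induce (↑(D i) : Set (Fin n))).Connected

/-- `R` is an incremental connected dominating set of `G`. -/
def IsIncConnDomSet {n : ℕ} (G : SimpleGraph (Fin n)) (R : Finset (Fin n)) : Prop :=
  ∃ D : ℕ → Finset (Fin n), IncConnDomChain G D ∧ R = D n

open SimpleGraph

section Helpers
variable {V : Type*} (G : SimpleGraph V)

/-- A walk with support inside `s` gives reachability in the induced graph. -/
lemma aux_reachable_induce {s : Set V} : ∀ {a b : V} (p : G.Walk a b),
    (∀ x ∈ p.support, x ∈ s) → ∀ (ha : a ∈ s) (hb : b ∈ s),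
    (G.induce s).Reachable ⟨a, ha⟩ ⟨b, hb⟩ := by
  intro a b p
  induction p with
  | nil => intro _ ha hb; rfl
  | @cons a c b h q ih =>
    intro hp ha hb
    have hc : c ∈ s := hp c (by simp [Walk.support_cons])
    have hadj : (G.induce s).Adj ⟨a, ha⟩ ⟨c, hc⟩ := by
      simp [comap_adj, h]
    exact hadj.reachable.trans (ih (fun x hx => hp x (by simp [Walk.support_cons, hx])) hc hb)

/-- From connectivity of the induced graph, get a walk in `G` with support in `s`. -/
lemma aux_walk_of_induce_connected {s : Set V} (hc : (G.induce s).Connected)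
    {a b : V} (ha : a ∈ s) (hb : b ∈ s) :
    ∃ p : G.Walk a b, ∀ x ∈ p.support, x ∈ s := by
  obtain ⟨q⟩ := hc.preconnected ⟨a, ha⟩ ⟨b, hb⟩
  refine ⟨q.map (SimpleGraph.Embedding.induce s).toHom, ?_⟩
  intro x hx
  replace hx : x ∈ (q.map (SimpleGraph.Embedding.induce s).toHom).support := hx
  rw [Walk.support_map] at hx
  obtain ⟨y, _, rfl⟩ := List.mem_map.mp hx
  exact y.2

/-- Interior vertices of a path have two distinct neighbors. -/
lemma aux_interior_two_neighbors : ∀ {a b x : V} (p : G.Walk a b), p.IsPath →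
    x ∈ p.support → x ≠ a → x ≠ b → ∃ u v : V, u ≠ v ∧ G.Adj x u ∧ G.Adj x v := by
  intro a b x p
  induction p with
  | nil => intro _ hx hxa _; simp [Walk.support_nil] at hx; exact absurd hx hxa
  | @cons a c b h q ih =>
    intro hp hx hxa hxb
    rw [Walk.support_cons, List.mem_cons] at hx
    rcases hx with rfl | hx
    · exact absurd rfl hxa
    by_cases hxc : x = c
    · subst hxc
      obtain ⟨d, hd, q', hq⟩ := (Walk.not_nil_iff (p := q)).mp (Walk.not_nil_of_ne hxb)
      refine ⟨a, d, ?_, h.symm, hd⟩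
      intro had
      have h2 : a ∉ q.support := ((Walk.cons_isPath_iff _ _).mp hp).2
      apply h2
      rw [had, hq]
      simp [Walk.support_cons]
    · exact ih ((Walk.cons_isPath_iff _ _).mp hp).1 hx hxc hxb

/-- If `v` and `u` are adjacent leaves (unique neighbors of each other), every vertex
with a walk to `v` is `v` or `u`. -/
lemma aux_two_leaves {u : V} : ∀ {w v : V}, G.Walk w v →
    G.neighborSet v = {u} → G.neighborSet u = {v} → w = v ∨ w = u := by
  intro w v p
  induction p with
  | nil => intro _ _; exact Or.inl rfl
  | @cons w x _ h q ih =>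
    intro hv hu
    rcases ih hv hu with rfl | rfl
    · right
      have : w ∈ G.neighborSet x := h.symm
      rw [hv] at this; exact this
    · left
      have : w ∈ G.neighborSet x := h.symm
      rw [hu] at this; exact this

end Helpers

/-- Let `T` be a tree on `n ≥ 2` vertices presented in an
always-connected order. The minimum size of an incremental connected dominating set
of `T` equals `int(T) + 1` if `v_1` is a leaf of `T` and `int(T)` otherwise, where
`int(T)` is the number of internal vertices (degree at least 2) of `T`. -/
theorem min_inc_connected_dominating_tree {n : ℕ} (hn : 2 ≤ n)
    (T : SimpleGraph (Fin n)) [DecidableRel T.Adj]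
    (htree : T.Connected ∧ T.IsAcyclic) (hconn : AlwaysConnected T) :
    IsLeast {k : ℕ | ∃ R : Finset (Fin n), IsIncConnDomSet T R ∧ R.card = k}
      (if T.degree (⟨0, by omega⟩ : Fin n) = 1 then
        (Finset.univ.filter (fun v => 2 ≤ T.degree v)).card + 1
      else
        (Finset.univ.filter (fun v => 2 ≤ T.degree v)).card) := by
  classical
  obtain ⟨hT, hA⟩ := htree
  obtain ⟨v0, hv00⟩ : ∃ v : Fin n, v.val = 0 := ⟨⟨0, by omega⟩, rfl⟩
  have hv0eq : (⟨0, by omega⟩ : Fin n) = v0 := Fin.ext (by simp [hv00])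
  rw [hv0eq]
  set I : Finset (Fin n) := Finset.univ.filter (fun v => 2 ≤ T.degree v) with hIdef
  -- every vertex has positive degree
  have hdeg1 : ∀ v : Fin n, 1 ≤ T.degree v := by
    intro v
    obtain ⟨w, hw⟩ := Fintype.exists_ne_of_one_lt_card
      (by simpa using (by omega : 1 < n)) v
    obtain ⟨p⟩ := hT.preconnected v w
    cases p with
    | nil => exact absurd rfl hw
    | cons h q => exact (T.degree_pos_iff_exists_adj v).mpr ⟨_, h⟩
  -- a leaf has a unique neighbor
  have hleaf : ∀ v : Fin n, T.degree v = 1 → ∃ u, T.neighborFinset v = {u} := by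
    intro v hv
    exact Finset.card_eq_one.mp (by rw [SimpleGraph.card_neighborFinset_eq_degree, hv])
  have finset_to_set : ∀ (v u : Fin n), T.neighborFinset v = {u} →
      T.neighborSet v = {u} := by
    intro v u h
    ext w
    have := Finset.ext_iff.mp h w
    simpa using this
  -- two distinct neighbors give degree at least two
  have hdeg2 : ∀ x y z : Fin n, y ≠ z → T.Adj x y → T.Adj x z → 2 ≤ T.degree x := by
    intro x y z hyz hxy hxz
    rw [← SimpleGraph.card_neighborFinset_eq_degree]
    have hsub : ({y, z} : Finset (Fin n)) ⊆ T.neighborFinset x := by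
      intro t ht
      rcases Finset.mem_insert.mp ht with rfl | ht
      · exact (T.mem_neighborFinset x t).mpr hxy
      · rw [Finset.mem_singleton] at ht; subst ht
        exact (T.mem_neighborFinset x t).mpr hxz
    calc 2 = ({y, z} : Finset (Fin n)).card := (Finset.card_pair hyz).symm
      _ ≤ _ := Finset.card_le_card hsub
  -- walks inside prefixes
  have hprefixwalk : ∀ i : ℕ, 1 ≤ i → i ≤ n → ∀ a b : Fin n, a.val < i → b.val < i →
      ∃ p : T.Walk a b, ∀ x ∈ p.support, x.val < i := by
    intro i h1 h2 a b ha hb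
    obtain ⟨p, hp⟩ := aux_walk_of_induce_connected T (hconn i h1 h2)
      (show a ∈ {v : Fin n | v.val < i} from ha)
      (show b ∈ {v : Fin n | v.val < i} from hb)
    exact ⟨p, hp⟩
  -- key fact about leaves
  have hleafnbr : ∀ v : Fin n, T.degree v = 1 → v ≠ v0 →
      ∃ u : Fin n, T.neighborFinset v = {u} ∧ u.val ≤ v.val ∧ (u = v0 ∨ 2 ≤ T.degree u) := by
    intro v hdv hvv0
    obtain ⟨u, hu⟩ := hleaf v hdv
    have hadj : T.Adj v u := (T.mem_neighborFinset v u).mp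
      (by rw [hu]; exact Finset.mem_singleton_self u)
    obtain ⟨p, hp⟩ := hprefixwalk (v.val + 1) (by omega) (by omega) v v0
      (by omega) (by omega)
    obtain ⟨x, hx, q, hq⟩ := (SimpleGraph.Walk.not_nil_iff (p := p)).mp
      (SimpleGraph.Walk.not_nil_of_ne hvv0)
    have hxu : x = u := by
      have hmem : x ∈ T.neighborFinset v := (T.mem_neighborFinset v x).mpr hx
      rw [hu, Finset.mem_singleton] at hmem; exact hmem
    have hxlt : x.val < v.val + 1 := hp x (by rw [hq]; simp [SimpleGraph.Walk.support_cons])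
    rw [hxu] at hxlt
    by_cases hu2 : 2 ≤ T.degree u
    · exact ⟨u, hu, by omega, Or.inr hu2⟩
    · have hdu : T.degree u = 1 := le_antisymm (by omega) (hdeg1 u)
      obtain ⟨u', hu'⟩ := hleaf u hdu
      have hveq : u' = v := by
        have hmem : v ∈ T.neighborFinset u := (T.mem_neighborFinset u v).mpr hadj.symm
        rw [hu', Finset.mem_singleton] at hmem; exact hmem.symm
      rw [hveq] at hu'
      obtain ⟨pw⟩ := hT.preconnected v0 v
      rcases aux_two_leaves T pw (finset_to_set v u hu) (finset_to_set u v hu') with h | h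
      · exact absurd h.symm hvv0
      · exact ⟨u, hu, by omega, Or.inl h.symm⟩
  -- the incremental chain
  set D : ℕ → Finset (Fin n) := fun i => insert v0 (I.filter fun v => v.val < i) with hDdef
  have hmemD : ∀ (i : ℕ) (v : Fin n), v ∈ D i ↔ v = v0 ∨ (2 ≤ T.degree v ∧ v.val < i) := by
    intro i v
    simp [hDdef, hIdef, Finset.mem_insert, Finset.mem_filter, and_assoc]
  have hchain : IncConnDomChain T D := by
    refine ⟨⟨?_, ?_⟩, ?_⟩
    · intro i _ _ v hv
      rw [hmemD] at hv ⊢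
      rcases hv with h | ⟨h1, h2⟩
      exacts [Or.inl h, Or.inr ⟨h1, by omega⟩]
    · intro i h1 h2
      constructor
      · intro v hv
        rcases (hmemD i v).mp hv with rfl | ⟨_, h⟩
        · omega
        · exact h
      · intro v hvi
        by_cases hvD : v ∈ D i
        · exact Or.inl hvD
        · right
          have hvv0 : v ≠ v0 := fun h => hvD ((hmemD i v).mpr (Or.inl h))
          have hdv : T.degree v = 1 := by
            have h1v := hdeg1 v
            by_contra h
            exact hvD ((hmemD i v).mpr (Or.inr ⟨by omega, hvi⟩))
          obtain ⟨u, hu, hule, hcase⟩ := hleafnbr v hdv hvv0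
          have hadj : T.Adj v u := (T.mem_neighborFinset v u).mp
            (by rw [hu]; exact Finset.mem_singleton_self u)
          refine ⟨u, ?_, hadj.symm⟩
          rcases hcase with rfl | h2'
          · exact (hmemD i u).mpr (Or.inl rfl)
          · exact (hmemD i u).mpr (Or.inr ⟨h2', by omega⟩)
    · intro i h1 h2
      rw [SimpleGraph.connected_iff_exists_forall_reachable]
      have hv0mem : v0 ∈ (↑(D i) : Set (Fin n)) :=
        Finset.mem_coe.mpr ((hmemD i v0).mpr (Or.inl rfl))
      refine ⟨⟨v0, hv0mem⟩, ?_⟩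
      rintro ⟨b, hb⟩
      have hbD : b ∈ D i := Finset.mem_coe.mp hb
      rcases (hmemD i b).mp hbD with rfl | ⟨hb2, hblt⟩
      · rfl
      · obtain ⟨p, hp⟩ := hprefixwalk i h1 h2 v0 b (by omega) hblt
        have hpath := p.bypass_isPath
        have hsupp : ∀ x ∈ p.bypass.support, x ∈ (↑(D i) : Set (Fin n)) := by
          intro x hx
          have hxlt : x.val < i := hp x (p.support_bypass_subset hx)
          by_cases hxv0 : x = v0
          · exact Finset.mem_coe.mpr ((hmemD i x).mpr (Or.inl hxv0))
          by_cases hxb : x = b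
          · subst hxb; exact hb
          · obtain ⟨y, z, hyz, hxy, hxz⟩ :=
              aux_interior_two_neighbors T p.bypass hpath hx hxv0 hxb
            exact Finset.mem_coe.mpr
              ((hmemD i x).mpr (Or.inr ⟨hdeg2 x y z hyz hxy hxz, hxlt⟩))
        exact aux_reachable_induce T p.bypass hsupp hv0mem hb
  have hDn : D n = insert v0 I := by
    show insert v0 (I.filter fun v => v.val < n) = insert v0 I
    congr 1
    exact Finset.filter_true_of_mem (fun x _ => x.isLt)
  have htarget : (if T.degree v0 = 1 then I.card + 1 else I.card) = (insert v0 I).card := by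
    by_cases h : T.degree v0 = 1
    · rw [if_pos h, Finset.card_insert_of_notMem]
      intro hmem
      rw [hIdef] at hmem
      simp at hmem
      omega
    · rw [if_neg h, Finset.insert_eq_self.mpr]
      have h1v := hdeg1 v0
      rw [hIdef]
      simp
      omega
  rw [htarget]
  constructor
  · exact ⟨insert v0 I, ⟨D, hchain, hDn.symm⟩, rfl⟩
  · rintro k ⟨R, ⟨D', ⟨⟨hmono, hdom⟩, hconn'⟩, hRD⟩, rfl⟩
    have hv0R : v0 ∈ D' 1 := by
      rcases (hdom 1 le_rfl (by omega)).2 v0 (by omega) with h | ⟨u, hu, hadj⟩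
      · exact h
      · exfalso
        have hu1 : u.val < 1 := (hdom 1 le_rfl (by omega)).1 u hu
        have huv : u = v0 := Fin.ext (by omega)
        exact T.loopless.irrefl v0 (huv ▸ hadj)
    have hsub1n : ∀ j, 1 ≤ j → j ≤ n → D' 1 ⊆ D' j := by
      intro j h1
      induction j, h1 using Nat.le_induction with
      | base => intro _; exact subset_rfl
      | succ j hj ih => intro h2; exact (ih (by omega)).trans (hmono j hj (by omega))
    have hv0Dn : v0 ∈ D' n := hsub1n n (by omega) le_rfl hv0R
    have hIDn : ∀ w : Fin n, 2 ≤ T.degree w → w ∈ D' n := by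
      intro w hw
      by_contra hwD
      have hdomn := (hdom n (by omega) le_rfl).2
      have hcn := hconn' n (by omega) le_rfl
      obtain ⟨a, ha, b, hb, hab⟩ := Finset.one_lt_card.mp
        (show 1 < (T.neighborFinset w).card by
          rw [SimpleGraph.card_neighborFinset_eq_degree]; omega)
      have hwa : T.Adj w a := (T.mem_neighborFinset w a).mp ha
      have hwb : T.Adj w b := (T.mem_neighborFinset w b).mp hb
      have anchor : ∀ c : Fin n, T.Adj w c →
          ∃ (c' : Fin n) (_ : c' ∈ D' n) (q : T.Walk c c'), ∀ x ∈ q.support, x ≠ w := by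
        intro c hc
        rcases hdomn c c.isLt with h | ⟨c', hc', hadj⟩
        · refine ⟨c, h, SimpleGraph.Walk.nil, ?_⟩
          intro x hx
          simp [SimpleGraph.Walk.support_nil] at hx
          subst hx; exact hc.ne'
        · refine ⟨c', hc', SimpleGraph.Walk.cons hadj.symm SimpleGraph.Walk.nil, ?_⟩
          intro x hx
          simp [SimpleGraph.Walk.support_cons, SimpleGraph.Walk.support_nil] at hx
          rcases hx with rfl | rfl
          · exact hc.ne'
          · exact fun h => hwD (h ▸ hc')
      obtain ⟨a', ha', qa, hqa⟩ := anchor a hwa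
      obtain ⟨b', hb', qb, hqb⟩ := anchor b hwb
      obtain ⟨qm, hqm⟩ := aux_walk_of_induce_connected T hcn
        (Finset.mem_coe.mpr ha') (Finset.mem_coe.mpr hb')
      set W : T.Walk a b := qa.append (qm.append qb.reverse) with hWdef
      have hWw : w ∉ W.support := by
        intro hx
        rw [hWdef, SimpleGraph.Walk.mem_support_append_iff,
          SimpleGraph.Walk.mem_support_append_iff,
          SimpleGraph.Walk.support_reverse, List.mem_reverse] at hx
        rcases hx with h | h | h
        · exact hqa w h rfl
        · exact hwD (Finset.mem_coe.mp (hqm w h))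
        · exact hqb w h rfl
      have hbp := W.bypass_isPath
      have hbpw : w ∉ W.bypass.support := fun h => hWw (W.support_bypass_subset h)
      have haw : T.Adj a w := hwa.symm
      have hP2 : (SimpleGraph.Walk.cons haw (SimpleGraph.Walk.cons hwb
          SimpleGraph.Walk.nil)).IsPath := by
        rw [SimpleGraph.Walk.isPath_def]
        simp [SimpleGraph.Walk.support_cons, SimpleGraph.Walk.support_nil]
        exact ⟨⟨hwa.ne', hab⟩, hwb.ne⟩
      have hpeq := SimpleGraph.isAcyclic_iff_path_unique.mp hA
        ⟨W.bypass, hbp⟩ ⟨_, hP2⟩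
      have hsupeq := congrArg (fun p : T.Path a b => (p : T.Walk a b).support) hpeq
      apply hbpw
      simp only at hsupeq
      rw [hsupeq]
      simp [SimpleGraph.Walk.support_cons, SimpleGraph.Walk.support_nil]
    have hsubset : insert v0 I ⊆ D' n := by
      intro x hx
      rcases Finset.mem_insert.mp hx with rfl | hx
      · exact hv0Dn
      · refine hIDn x ?_
        rw [hIdef] at hx
        simpa using hx
    calc (insert v0 I).card ≤ (D' n).card := Finset.card_le_card hsubset
      _ = R.card := by rw [hRD]
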